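/- For any continuous g : ℤₚ → ℂₚ and all x ∈ ℤₚ, S⁻¹(g)(x) = Σ_{n=0}^∞ (x)ₙ g(x−n), where (x)ₙ = x(x−1)⋯(x−n+1) is the falling factorial; the series converges uniformly since |(x)ₙ| ≤ |n!|. -/

import Mathlib

open Filter Finset

private lemma aux_norm_descPochhammer {p : ℕ} [Fact p.Prime] (n : ℕ) (x : ℤ_[p]) :
    ‖(descPochhammer ℤ_[p] n).eval x‖ ≤ ‖(n.factorial : ℤ_[p])‖ := by
  rw [descPochhammer_eval_eq_ascPochhammer]
  exact PadicInt.norm_ascPochhammer_le n _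

private lemma aux_norm_factorial {p : ℕ} [Fact p.Prime] (n : ℕ) :
    ‖(n.factorial : ℤ_[p])‖ ≤ ((p : ℝ)⁻¹) ^ (n / p) := by
  have hp := (Fact.out : p.Prime)
  have hdvd : p ^ (n / p) ∣ n.factorial := by
    rw [Nat.Prime.pow_dvd_factorial_iff hp (Nat.lt_succ_self _)]
    rcases Nat.eq_zero_or_pos (n / p) with h | h
    · simp [h]
    · have hpn : p ≤ n := by simpa using (Nat.le_div_iff_mul_le hp.pos).mp h
      have h1 : 0 < Nat.log p n := Nat.log_pos hp.one_lt hpn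
      calc n / p = n / p ^ 1 := by rw [pow_one]
        _ ≤ ∑ i ∈ Ico 1 (Nat.log p n + 1), n / p ^ i :=
          Finset.single_le_sum (f := fun i => n / p ^ i) (fun i _ => Nat.zero_le _)
            (by simp [Nat.lt_succ_iff, h1])
  obtain ⟨m, hm⟩ := hdvd
  calc ‖(n.factorial : ℤ_[p])‖ = ‖(p : ℤ_[p])‖ ^ (n/p) * ‖(m : ℤ_[p])‖ := by
        rw [hm]; push_cast; rw [norm_mul, norm_pow]
    _ ≤ ((p:ℝ)⁻¹) ^ (n/p) * 1 := by
        refine mul_le_mul ?_ (PadicInt.norm_le_one _) (norm_nonneg _) (by positivity)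
        rw [PadicInt.norm_p]
    _ = _ := mul_one _

private lemma aux_summable {p : ℕ} [Fact p.Prime] :
    Summable (fun n : ℕ => ((p : ℝ)⁻¹) ^ (n / p)) := by
  have hp := (Fact.out : p.Prime)
  have hp1 : (1:ℝ) < p := by exact_mod_cast hp.one_lt
  set r : ℝ := (p:ℝ)⁻¹ with hr
  have hr0 : 0 < r := by positivity
  have hr1 : r < 1 := inv_lt_one_of_one_lt₀ hp1
  set s : ℝ := r ^ ((p:ℝ)⁻¹) with hs
  have hs0 : 0 ≤ s := Real.rpow_nonneg hr0.le _
  have hs1 : s < 1 := Real.rpow_lt_one hr0.le hr1 (by positivity)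
  have hb : ∀ n : ℕ, r ^ (n / p) ≤ r⁻¹ * s ^ n := by
    intro n
    have key : (n:ℝ) * (p:ℝ)⁻¹ - 1 ≤ ((n / p : ℕ) : ℝ) := by
      have hnat : n < (n / p + 1) * p := by
        have hmod := Nat.mod_lt n hp.pos
        calc n = p * (n / p) + n % p := (Nat.div_add_mod n p).symm
          _ < p * (n / p) + p := by omega
          _ = (n / p + 1) * p := by ring
      have : (n:ℝ) < (((n/p : ℕ):ℝ) + 1) * p := by exact_mod_cast hnat
      rw [sub_le_iff_le_add]
      calc (n:ℝ) * (p:ℝ)⁻¹ ≤ ((((n/p:ℕ):ℝ)+1) * p) * (p:ℝ)⁻¹ := by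
            apply mul_le_mul_of_nonneg_right this.le (by positivity)
        _ = ((n/p:ℕ):ℝ) + 1 := by field_simp
    calc r ^ (n/p) = r ^ (((n/p : ℕ):ℝ)) := by rw [Real.rpow_natCast]
      _ ≤ r ^ ((n:ℝ) * (p:ℝ)⁻¹ - 1) := Real.rpow_le_rpow_of_exponent_ge hr0 hr1.le key
      _ = r⁻¹ * s ^ n := by
          rw [Real.rpow_sub hr0, Real.rpow_one, div_eq_mul_inv, mul_comm]
          congr 1
          rw [hs, ← Real.rpow_natCast (r ^ ((p:ℝ)⁻¹)) n, ← Real.rpow_mul hr0.le, mul_comm]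
  exact Summable.of_nonneg_of_le (fun n => by positivity) hb
    ((summable_geometric_of_lt_one hs0 hs1).mul_left _)


/-- The canonical embedding `ℤ_[p] → K` (where `K` plays the role of `ℂ_p`,
a complete nontrivially normed field extension of `ℚ_[p]`). -/
noncomputable def pc (p : ℕ) [Fact p.Prime] (K : Type*) [NontriviallyNormedField K]
    [NormedAlgebra ℚ_[p] K] (x : ℤ_[p]) : K :=
  algebraMap ℚ_[p] K x

/-- The operator `S` : `S(f)(x) = f(x) - x·f(x-1)`. -/
noncomputable def Sop (p : ℕ) [Fact p.Prime] (K : Type*) [NontriviallyNormedField K]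
    [NormedAlgebra ℚ_[p] K] (f : ℤ_[p] → K) : ℤ_[p] → K :=
  fun x => f x - pc p K x * f (x - 1)

/-- The Mahler basis function `βₙ(x) = C(x,n) = x(x-1)⋯(x-n+1)/n!`, valued in `K`. -/
noncomputable def bK (p : ℕ) [Fact p.Prime] (K : Type*) [NontriviallyNormedField K]
    [NormedAlgebra ℚ_[p] K] (n : ℕ) (x : ℤ_[p]) : K :=
  (∏ i ∈ Finset.range n, (pc p K x - (i : K))) / (n.factorial : K)

/-- For any continuous `g : ℤ_[p] → K`, the unique continuous `f`
with `S f = g` is given by `f(x) = Σ_{n=0}^∞ (x)ₙ g(x - n)`, where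
`(x)ₙ = x(x-1)⋯(x-n+1)` is the falling factorial. -/
theorem stmt_8 (p : ℕ) [Fact p.Prime] (K : Type*) [NontriviallyNormedField K]
    [NormedAlgebra ℚ_[p] K] [CompleteSpace K]
    (g : ℤ_[p] → K) (hg : Continuous g)
    (f : ℤ_[p] → K) (hf : Continuous f) (hSf : Sop p K f = g) :
    ∀ x : ℤ_[p], f x = ∑' n : ℕ,
      (∏ i ∈ Finset.range n, (pc p K x - (i : K))) * g (x - (n : ℤ_[p])) := by
  intro x
  set φ : ℤ_[p] →+* K := (algebraMap ℚ_[p] K).comp (PadicInt.Coe.ringHom) with hφ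
  have hpcφ : ∀ y : ℤ_[p], pc p K y = φ y := fun y => rfl
  have hnormφ : ∀ y : ℤ_[p], ‖φ y‖ = ‖y‖ := fun y => by
    show ‖algebraMap ℚ_[p] K (y : ℚ_[p])‖ = ‖y‖
    rw [norm_algebraMap', PadicInt.padic_norm_e_of_padicInt]
  set D : ℕ → ℤ_[p] := fun n => (descPochhammer ℤ_[p] n).eval x with hD
  have hD0 : D 0 = 1 := by simp [hD, descPochhammer_zero]
  have hDsucc : ∀ n : ℕ, D (n + 1) = D n * (x - n) := fun n =>
    descPochhammer_succ_eval n x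
  have hprod : ∀ n : ℕ, (∏ i ∈ Finset.range n, (pc p K x - (i : K))) = φ (D n) := by
    intro n
    induction n with
    | zero => simp [hD0]
    | succ n ih =>
      rw [Finset.prod_range_succ, ih, hDsucc, map_mul]
      congr 1
      rw [map_sub, map_natCast, hpcφ]
  -- bounds
  obtain ⟨Cg, hCg⟩ : ∃ C, ∀ y : ℤ_[p], ‖g y‖ ≤ C := by
    obtain ⟨C, hC⟩ := isCompact_univ.exists_bound_of_continuousOn hg.continuousOn
    exact ⟨C, fun y => hC y (Set.mem_univ y)⟩
  obtain ⟨Cf, hCf⟩ : ∃ C, ∀ y : ℤ_[p], ‖f y‖ ≤ C := by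
    obtain ⟨C, hC⟩ := isCompact_univ.exists_bound_of_continuousOn hf.continuousOn
    exact ⟨C, fun y => hC y (Set.mem_univ y)⟩
  have hCg0 : 0 ≤ Cg := le_trans (norm_nonneg _) (hCg 0)
  have hCf0 : 0 ≤ Cf := le_trans (norm_nonneg _) (hCf 0)
  set T : ℕ → K := fun n => φ (D n) * g (x - n) with hT
  set A : ℕ → K := fun n => φ (D n) * f (x - n) with hA
  have hnormD : ∀ n : ℕ, ‖φ (D n)‖ ≤ ((p:ℝ)⁻¹) ^ (n / p) := fun n => by
    rw [hnormφ]
    exact (aux_norm_descPochhammer n x).trans (aux_norm_factorial n)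
  -- telescoping
  have hTA : ∀ n : ℕ, T n = A n - A (n + 1) := by
    intro n
    have hgn : g (x - (n:ℤ_[p])) = f (x - (n:ℤ_[p])) - pc p K (x - (n:ℤ_[p])) * f (x - (n:ℤ_[p]) - 1) := by
      rw [← hSf]; rfl
    have hxn : x - ((n : ℕ) + 1 : ℕ) = x - n - 1 := by push_cast; ring
    simp only [hT, hA, hgn, hDsucc, map_mul, hxn, hpcφ]
    ring
  have hpartial : ∀ N : ℕ, ∑ n ∈ Finset.range N, T n = f x - A N := by
    intro N
    rw [Finset.sum_congr rfl (fun n _ => hTA n), Finset.sum_range_sub' A N]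
    congr 1
    simp [hA, hD0]
  -- A tends to 0
  have hAlim : Tendsto A atTop (nhds 0) := by
    have hb : ∀ n : ℕ, ‖A n‖ ≤ ((p:ℝ)⁻¹) ^ (n / p) * Cf := by
      intro n
      rw [hA]
      calc ‖φ (D n) * f (x - n)‖ = ‖φ (D n)‖ * ‖f (x - n)‖ := norm_mul _ _
        _ ≤ ((p:ℝ)⁻¹) ^ (n / p) * Cf :=
          mul_le_mul (hnormD n) (hCf _) (norm_nonneg _) (by positivity)
    have hb0 : Tendsto (fun n : ℕ => ((p:ℝ)⁻¹) ^ (n / p) * Cf) atTop (nhds 0) := by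
      simpa using (aux_summable (p := p)).tendsto_atTop_zero.mul_const Cf
    exact squeeze_zero_norm hb hb0
  -- summability
  have hsum : Summable T := by
    apply Summable.of_norm
    refine Summable.of_nonneg_of_le (f := fun n => ((p:ℝ)⁻¹) ^ (n / p) * Cg)
      (fun n => norm_nonneg _) (fun n => ?_) ((aux_summable (p := p)).mul_right Cg)
    rw [hT]
    calc ‖φ (D n) * g (x - n)‖ = ‖φ (D n)‖ * ‖g (x - n)‖ := norm_mul _ _
      _ ≤ ((p:ℝ)⁻¹) ^ (n / p) * Cg :=
        mul_le_mul (hnormD n) (hCg _) (norm_nonneg _) (by positivity)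
  have htend := hsum.hasSum.tendsto_sum_nat
  have htend2 : Tendsto (fun N => ∑ n ∈ Finset.range N, T n) atTop (nhds (f x)) := by
    simp only [hpartial]
    simpa using tendsto_const_nhds.sub hAlim
  have : f x = ∑' n, T n := tendsto_nhds_unique htend2 htend
  rw [this]
  exact tsum_congr fun n => by rw [hT, hprod]
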